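/- arXiv:1910.08736 — 2 statements merged into one kernel-verified Lean document; each statement's English description precedes it below -/
import Mathlib

section
/- For any set S of n ≥ 3 points in general position in the plane, Σ_{k=3}^{n} Σ_{ℓ=0}^{n−3} Fib(k+2ℓ) · X_{k,ℓ}(S) = Fib(2n) − n − binom(n,2), where Fib denotes the Fibonacci sequence with Fib(0)=0, Fib(1)=1. -/
open Finset
open scoped Classical

def GenPos (S : Finset (ℝ × ℝ)) : Prop :=
  ∀ T ⊆ S, T.card = 3 → ¬ Collinear ℝ (T : Set (ℝ × ℝ))

def ConvexPos (T : Finset (ℝ × ℝ)) : Prop :=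
  ∀ p ∈ T, p ∉ convexHull ℝ ((T : Set (ℝ × ℝ)) \ {p})

/-- number of convex k-gons with vertices in S and exactly l points of S inside -/
noncomputable def X (S : Finset (ℝ × ℝ)) (k l : ℕ) : ℕ :=
  ((Finset.powersetCard k S).filter (fun T => ConvexPos T ∧
    (S.filter (fun p => p ∈ interior (convexHull ℝ (T : Set (ℝ × ℝ))))).card = l)).card

/-- number of extreme points (convex hull vertices) of S -/
noncomputable def hullVerts (S : Finset (ℝ × ℝ)) : ℕ :=
  (S.filter (fun p => p ∉ convexHull ℝ ((S : Set (ℝ × ℝ)) \ {p}))).card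

noncomputable def extF (T : Finset (ℝ × ℝ)) : Finset (ℝ × ℝ) :=
  T.filter (fun p => p ∉ convexHull ℝ ((T : Set (ℝ × ℝ)) \ {p}))

lemma hullK (T : Finset (ℝ × ℝ)) :
    convexHull ℝ (Set.extremePoints ℝ (convexHull ℝ (T : Set (ℝ × ℝ)))) =
      convexHull ℝ (T : Set (ℝ × ℝ)) := by
  have hfin : (T : Set (ℝ × ℝ)).Finite := T.finite_toSet
  have hKfin : (Set.extremePoints ℝ (convexHull ℝ (T : Set (ℝ × ℝ)))).Finite :=
    hfin.subset extremePoints_convexHull_subset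
  have h := closure_convexHull_extremePoints (hfin.isCompact_convexHull ℝ)
    (convex_convexHull ℝ (T : Set (ℝ × ℝ)))
  rwa [(hKfin.isClosed_convexHull ℝ).closure_eq] at h

lemma extF_coe (T : Finset (ℝ × ℝ)) :
    ((extF T : Finset (ℝ × ℝ)) : Set (ℝ × ℝ)) =
      Set.extremePoints ℝ (convexHull ℝ (T : Set (ℝ × ℝ))) := by
  ext x
  simp only [extF, coe_filter, Set.mem_setOf_eq]
  constructor
  · rintro ⟨hxT, hx⟩
    by_contra hne
    have h1 : Set.extremePoints ℝ (convexHull ℝ (T : Set (ℝ × ℝ))) ⊆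
        (T : Set (ℝ × ℝ)) \ {x} := fun y hy =>
      ⟨extremePoints_convexHull_subset hy, by rintro rfl; exact hne hy⟩
    have h2 : convexHull ℝ (T : Set (ℝ × ℝ)) ⊆ convexHull ℝ ((T : Set (ℝ × ℝ)) \ {x}) := by
      rw [← hullK T]; exact convexHull_mono h1
    exact hx (h2 (subset_convexHull ℝ _ hxT))
  · intro hx
    refine ⟨extremePoints_convexHull_subset hx, fun hmem => ?_⟩
    have h := ((convex_convexHull ℝ _).mem_extremePoints_iff_mem_diff_convexHull_diff).1 hx
    exact h.2 (convexHull_mono (Set.diff_subset_diff_left (subset_convexHull ℝ _)) hmem)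

lemma convexHull_extF (T : Finset (ℝ × ℝ)) :
    convexHull ℝ ((extF T : Finset (ℝ × ℝ)) : Set (ℝ × ℝ)) =
      convexHull ℝ (T : Set (ℝ × ℝ)) := by
  rw [extF_coe, hullK]

lemma extF_subset (T : Finset (ℝ × ℝ)) : extF T ⊆ T := filter_subset _ _

lemma convexPos_extF (T : Finset (ℝ × ℝ)) : ConvexPos (extF T) := by
  intro p hp
  have h := (mem_filter.1 hp).2
  intro hmem
  refine h (convexHull_mono (Set.diff_subset_diff_left ?_) hmem)
  exact_mod_cast extF_subset T

lemma extF_of_convexPos {P : Finset (ℝ × ℝ)} (h : ConvexPos P) : extF P = P :=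
  filter_eq_self.2 h

lemma collinear_convexHull {s : Set (ℝ × ℝ)} (h : Collinear ℝ s) :
    Collinear ℝ (convexHull ℝ s) := by
  have hv : vectorSpan ℝ (convexHull ℝ s) = vectorSpan ℝ s := by
    rw [← direction_affineSpan, affineSpan_convexHull, direction_affineSpan]
  rwa [collinear_iff_rank_le_one, hv, ← collinear_iff_rank_le_one]

lemma collinear_of_card_le_two {V : Finset (ℝ × ℝ)} (h : V.card ≤ 2) :
    Collinear ℝ (V : Set (ℝ × ℝ)) := by
  interval_cases hc : V.card
  · rw [Finset.card_eq_zero.1 hc]; simpa using collinear_empty ℝ (ℝ × ℝ)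
  · obtain ⟨a, rfl⟩ := Finset.card_eq_one.1 hc
    simpa using collinear_singleton ℝ a
  · obtain ⟨a, b, _, rfl⟩ := Finset.card_eq_two.1 hc
    simpa using collinear_pair ℝ a b

lemma interior_hull_nonempty {T : Finset (ℝ × ℝ)} (h : ¬ Collinear ℝ (T : Set (ℝ × ℝ))) :
    (interior (convexHull ℝ (T : Set (ℝ × ℝ)))).Nonempty := by
  rw [(convex_convexHull ℝ _).interior_nonempty_iff_affineSpan_eq_top, affineSpan_convexHull]
  by_contra htop
  apply h
  have hne : (T : Set (ℝ × ℝ)).Nonempty := by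
    rcases Set.eq_empty_or_nonempty (T : Set (ℝ × ℝ)) with he | hne
    · exact absurd (he ▸ collinear_empty ℝ (ℝ × ℝ)) h
    · exact hne
  have hvs : vectorSpan ℝ (T : Set (ℝ × ℝ)) ≠ ⊤ := by
    intro hv
    exact htop ((AffineSubspace.affineSpan_eq_top_iff_vectorSpan_eq_top_of_nonempty ℝ _ _ hne).2 hv)
  rw [collinear_iff_rank_le_one]
  have hlt : Module.finrank ℝ (vectorSpan ℝ (T : Set (ℝ × ℝ))) < Module.finrank ℝ (ℝ × ℝ) :=
    Submodule.finrank_lt hvs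
  have h2 : Module.finrank ℝ (ℝ × ℝ) = 2 := by
    simp [Module.finrank_prod]
  have hle : Module.finrank ℝ (vectorSpan ℝ (T : Set (ℝ × ℝ))) ≤ 1 := by omega
  calc Module.rank ℝ (vectorSpan ℝ (T : Set (ℝ × ℝ)))
      = (Module.finrank ℝ (vectorSpan ℝ (T : Set (ℝ × ℝ))) : Cardinal) :=
        (Module.finrank_eq_rank ℝ _).symm
    _ ≤ (1 : ℕ) := by exact_mod_cast hle
    _ = 1 := by norm_num

lemma collinear_level {f : (ℝ × ℝ) →L[ℝ] ℝ} (hf : f ≠ 0) (c : ℝ) :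
    Collinear ℝ {x : ℝ × ℝ | f x = c} := by
  rw [collinear_iff_rank_le_one]
  set g : (ℝ × ℝ) →ₗ[ℝ] ℝ := (f : (ℝ × ℝ) →ₗ[ℝ] ℝ) with hg
  have hsub : vectorSpan ℝ {x : ℝ × ℝ | f x = c} ≤ LinearMap.ker g := by
    rw [vectorSpan_def, Submodule.span_le]
    rintro v ⟨a, ha, b, hb, rfl⟩
    simp only [Set.mem_setOf_eq] at ha hb
    have : g (a - b) = 0 := by
      have : g a = c := ha
      have hb' : g b = c := hb
      simp [map_sub, this, hb']
    simpa [vsub_eq_sub, LinearMap.mem_ker] using this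
  have hker : Module.finrank ℝ (LinearMap.ker g) ≤ 1 := by
    have hrk := LinearMap.finrank_range_add_finrank_ker g
    have h2 : Module.finrank ℝ (ℝ × ℝ) = 2 := by simp [Module.finrank_prod]
    have hrange : Module.finrank ℝ (LinearMap.range g) ≠ 0 := by
      intro h0
      rw [Submodule.finrank_eq_zero] at h0
      rw [LinearMap.range_eq_bot] at h0
      apply hf
      apply ContinuousLinearMap.coe_injective
      rw [← hg, h0]
      simp
    omega
  calc Module.rank ℝ (vectorSpan ℝ {x : ℝ × ℝ | f x = c})
      ≤ Module.rank ℝ (LinearMap.ker g) := Submodule.rank_mono hsub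
    _ = (Module.finrank ℝ (LinearMap.ker g) : Cardinal) := (Module.finrank_eq_rank ℝ _).symm
    _ ≤ (1 : ℕ) := by exact_mod_cast hker
    _ = 1 := by norm_num

lemma forall_le_of_interior_lt {C : Set (ℝ × ℝ)} (hC : Convex ℝ C) {p : ℝ × ℝ}
    {f : (ℝ × ℝ) →L[ℝ] ℝ} (hne : (interior C).Nonempty)
    (hf : ∀ a ∈ interior C, f a < f p) {x : ℝ × ℝ} (hx : x ∈ C) : f x ≤ f p := by
  obtain ⟨y, hy⟩ := hne
  by_contra hlt
  push_neg at hlt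
  set d : ℝ := f y - f x with hd
  have key : ∀ t : ℝ, t ∈ Set.Ioc (0 : ℝ) 1 → f x + t * d < f p := by
    intro t ht
    have h1 := hf _ (hC.add_smul_sub_mem_interior hx hy ht)
    have h2 : f (x + t • (y - x)) = f x + t * d := by
      simp [map_add, map_smul, map_sub, hd, smul_eq_mul]
    rw [h2] at h1
    exact h1
  set ε : ℝ := f x - f p with he
  have hε : 0 < ε := sub_pos.2 hlt
  set t : ℝ := min 1 (ε / (2 * (|d| + 1))) with htdef
  have ht0 : 0 < t := lt_min one_pos (by positivity)
  have ht1 : t ≤ 1 := min_le_left _ _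
  have h2 := key t ⟨ht0, ht1⟩
  have h3 : t ≤ ε / (2 * (|d| + 1)) := min_le_right _ _
  have habs : 0 ≤ |d| := abs_nonneg d
  have htd : t * |d| ≤ ε / 2 := by
    calc t * |d| ≤ (ε / (2 * (|d| + 1))) * |d| := mul_le_mul_of_nonneg_right h3 habs
      _ ≤ ε / 2 := by
        rw [div_mul_eq_mul_div, div_le_div_iff₀ (by positivity) (by norm_num)]
        nlinarith
  have hneg : -(ε / 2) ≤ t * d := by
    have := neg_abs_le (t * d)
    have habs2 : |t * d| = t * |d| := by rw [abs_mul, abs_of_pos ht0]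
    linarith
  have hfp : f x + t * d < f p := h2
  nlinarith [hneg, hε, hfp]

lemma not_mem_interior_of_convexPos {P : Finset (ℝ × ℝ)} (h : ConvexPos P) {v : ℝ × ℝ}
    (hv : v ∈ P) : v ∉ interior (convexHull ℝ (P : Set (ℝ × ℝ))) := by
  intro hint
  have hex : v ∈ Set.extremePoints ℝ (convexHull ℝ (P : Set (ℝ × ℝ))) := by
    rw [← extF_coe, extF_of_convexPos h]
    exact_mod_cast hv
  obtain ⟨ε, hε, hball⟩ := Metric.isOpen_iff.1 isOpen_interior v hint
  set u : ℝ × ℝ := (ε / 2, 0) with hu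
  have hun : ‖u‖ = ε / 2 := by
    rw [hu, Prod.norm_def]
    simp only [norm_zero]
    rw [Real.norm_eq_abs, abs_of_pos (half_pos hε)]
    exact max_eq_left (by positivity)
  have h1 : v + u ∈ convexHull ℝ (P : Set (ℝ × ℝ)) := by
    apply interior_subset
    apply hball
    rw [Metric.mem_ball, dist_eq_norm]
    simpa [hun] using by linarith
  have h2 : v - u ∈ convexHull ℝ (P : Set (ℝ × ℝ)) := by
    apply interior_subset
    apply hball
    rw [Metric.mem_ball, dist_eq_norm]
    have : v - u - v = -u := by abel
    rw [this, norm_neg, hun]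
    linarith
  have hseg : v ∈ openSegment ℝ (v + u) (v - u) := by
    refine ⟨1/2, 1/2, by norm_num, by norm_num, by norm_num, ?_⟩
    module
  have := (mem_extremePoints.1 hex).2 _ h1 _ h2 hseg
  have hu0 : v + u = v := this.1
  have : u = 0 := by
    have := congrArg (fun w => w - v) hu0
    simpa [add_sub_cancel_left] using this
  rw [hu] at this
  have := congrArg Prod.fst this
  simp at this
  linarith

lemma three_le_card_extF {S T : Finset (ℝ × ℝ)} (hgp : GenPos S) (hTS : T ⊆ S)
    (hT3 : 3 ≤ T.card) : 3 ≤ (extF T).card := by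
  by_contra hc
  push_neg at hc
  have hcol : Collinear ℝ ((extF T : Finset (ℝ × ℝ)) : Set (ℝ × ℝ)) :=
    collinear_of_card_le_two (by omega)
  have hhull := convexHull_extF T
  have hTcol : Collinear ℝ (T : Set (ℝ × ℝ)) := by
    have h1 : (T : Set (ℝ × ℝ)) ⊆ convexHull ℝ ((extF T : Finset (ℝ × ℝ)) : Set (ℝ × ℝ)) := by
      rw [hhull]; exact subset_convexHull ℝ _
    exact (collinear_convexHull hcol).subset h1
  obtain ⟨T', hT'sub, hT'card⟩ := Finset.exists_subset_card_eq hT3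
  exact hgp T' (hT'sub.trans hTS) hT'card (hTcol.subset (by exact_mod_cast hT'sub))

lemma mem_interior_hull {S T : Finset (ℝ × ℝ)} (hgp : GenPos S) (hTS : T ⊆ S)
    (hT3 : 3 ≤ T.card) {p : ℝ × ℝ} (hp : p ∈ T) (hpe : p ∉ extF T) :
    p ∈ interior (convexHull ℝ ((extF T : Finset (ℝ × ℝ)) : Set (ℝ × ℝ))) := by
  rw [convexHull_extF]
  set C := convexHull ℝ (T : Set (ℝ × ℝ)) with hC
  have hpC : p ∈ C := subset_convexHull ℝ _ hp
  have hTnc : ¬ Collinear ℝ (T : Set (ℝ × ℝ)) := by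
    intro hcol
    obtain ⟨T', hT'sub, hT'card⟩ := Finset.exists_subset_card_eq hT3
    exact hgp T' (hT'sub.trans hTS) hT'card (hcol.subset (by exact_mod_cast hT'sub))
  have hint : (interior C).Nonempty := interior_hull_nonempty hTnc
  by_contra hpint
  obtain ⟨f, hf⟩ := geometric_hahn_banach_open_point
    ((convex_convexHull ℝ (T : Set (ℝ × ℝ))).interior) isOpen_interior hpint
  have hfle : ∀ x ∈ C, f x ≤ f p :=
    fun x hx => forall_le_of_interior_lt (convex_convexHull ℝ _) hint hf hx
  -- p is in hull of Q := extF T ∩ {f = f p}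
  set V := extF T with hV
  set Q := V.filter (fun v => f v = f p) with hQ
  have hpQ : p ∈ convexHull ℝ (Q : Set (ℝ × ℝ)) := by
    have hpV : p ∈ convexHull ℝ (V : Set (ℝ × ℝ)) := by rw [hV, convexHull_extF]; exact hpC
    obtain ⟨w, hw0, hw1, hwc⟩ := Finset.mem_convexHull.1 hpV
    have hnonneg : ∀ v ∈ V, 0 ≤ w v * (f p - f v) := by
      intro v hv
      have hvC : v ∈ C := by
        rw [hC, ← convexHull_extF T]
        exact subset_convexHull ℝ _ (by exact_mod_cast hv)
      exact mul_nonneg (hw0 v hv) (sub_nonneg.2 (hfle v hvC))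
    have hfp : f p = ∑ v ∈ V, w v * f v := by
      rw [← hwc, Finset.centerMass_eq_of_sum_1 _ _ hw1]
      simp [map_sum, map_smul, smul_eq_mul]
    have hsum : ∑ v ∈ V, w v * (f p - f v) = 0 := by
      have hexp : ∑ v ∈ V, w v * (f p - f v)
          = (∑ v ∈ V, w v) * f p - ∑ v ∈ V, w v * f v := by
        rw [Finset.sum_mul, ← Finset.sum_sub_distrib]
        exact Finset.sum_congr rfl fun v _ => by ring
      rw [hexp, hw1, one_mul, ← hfp]
      ring
    have hfv : ∀ v ∈ V, w v ≠ 0 → f v = f p := by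
      intro v hv hwv
      have h0 := (Finset.sum_eq_zero_iff_of_nonneg hnonneg).1 hsum v hv
      rcases mul_eq_zero.1 h0 with h | h
      · exact absurd h hwv
      · linarith [sub_eq_zero.1 h]
    have hfilter : V.filter (fun v => w v ≠ 0) ⊆ Q := by
      intro v hv
      rw [Finset.mem_filter] at hv
      exact Finset.mem_filter.2 ⟨hv.1, hfv _ hv.1 hv.2⟩
    have hcm : (V.filter (fun v => w v ≠ 0)).centerMass w id = p := by
      rw [Finset.centerMass_filter_ne_zero]
      exact hwc
    have hsumw : ∑ v ∈ V.filter (fun v => w v ≠ 0), w v = 1 := by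
      rw [Finset.sum_filter_ne_zero]
      exact hw1
    rw [← hcm]
    exact Finset.centerMass_mem_convexHull _ (fun i hi => hw0 i (Finset.mem_filter.1 hi).1)
      (by rw [hsumw]; norm_num) (fun i hi => by exact_mod_cast hfilter hi)
  have hQne : Q.Nonempty := by
    rcases Q.eq_empty_or_nonempty with h | h
    · rw [h] at hpQ; simp at hpQ
    · exact h
  by_cases hQ2 : 2 ≤ Q.card
  · obtain ⟨q, hq, r, hr, hqr⟩ := Finset.one_lt_card.1 hQ2
    have hqV : q ∈ V := (Finset.mem_filter.1 hq).1
    have hrV : r ∈ V := (Finset.mem_filter.1 hr).1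
    have hpq : p ≠ q := fun h => hpe (h ▸ hqV)
    have hpr : p ≠ r := fun h => hpe (h ▸ hrV)
    have hT3S : ({p, q, r} : Finset (ℝ × ℝ)) ⊆ S := by
      intro x hx
      simp only [Finset.mem_insert, Finset.mem_singleton] at hx
      rcases hx with rfl | rfl | rfl
      · exact hTS hp
      · exact hTS (extF_subset T hqV)
      · exact hTS (extF_subset T hrV)
    have hcard : ({p, q, r} : Finset (ℝ × ℝ)).card = 3 := by
      rw [Finset.card_insert_of_notMem (by simp [hpq, hpr]),
        Finset.card_insert_of_notMem (by simp [hqr]), Finset.card_singleton]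
    have hf0 : f ≠ 0 := by
      intro h0
      obtain ⟨y, hy⟩ := hint
      have := hf y hy
      rw [h0] at this
      simp at this
    have hcol : Collinear ℝ (({p, q, r} : Finset (ℝ × ℝ)) : Set (ℝ × ℝ)) := by
      apply (collinear_level hf0 (f p)).subset
      intro x hx
      simp only [Finset.coe_insert, Finset.coe_singleton, Set.mem_insert_iff,
        Set.mem_singleton_iff] at hx
      rcases hx with rfl | rfl | rfl
      · exact rfl
      · exact (Finset.mem_filter.1 hq).2
      · exact (Finset.mem_filter.1 hr).2
    exact hgp _ hT3S hcard hcol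
  · have h1 : Q.card = 1 := by
      have := Finset.card_pos.2 hQne
      omega
    obtain ⟨q, hq⟩ := Finset.card_eq_one.1 h1
    rw [hq] at hpQ
    simp only [Finset.coe_singleton, convexHull_singleton, Set.mem_singleton_iff] at hpQ
    apply hpe
    rw [hpQ]
    exact (Finset.mem_filter.1 (hq ▸ Finset.mem_singleton_self q)).1

lemma fib_expand : ∀ (l a : ℕ), ∑ j ∈ range (l + 1), l.choose j * Nat.fib (a + j)
    = Nat.fib (a + 2 * l) := by
  intro l
  induction l with
  | zero => intro a; simp
  | succ l ih =>
    intro a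
    have h0 : ∑ j ∈ range (l + 1 + 1), (l + 1).choose j * Nat.fib (a + j)
        = (∑ j ∈ range (l + 1), (l + 1).choose (j + 1) * Nat.fib (a + (j + 1)))
          + (l + 1).choose 0 * Nat.fib (a + 0) := Finset.sum_range_succ' _ _
    have h1 : ∀ j, (l + 1).choose (j + 1) * Nat.fib (a + (j + 1))
        = l.choose j * Nat.fib ((a + 1) + j) + l.choose (j + 1) * Nat.fib (a + (j + 1)) := by
      intro j
      have e : a + (j + 1) = a + 1 + j := by omega
      rw [Nat.choose_succ_succ, add_mul, e]
    have h2 : ∑ j ∈ range (l + 1), (l + 1).choose (j + 1) * Nat.fib (a + (j + 1))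
        = (∑ j ∈ range (l + 1), l.choose j * Nat.fib ((a + 1) + j))
          + ∑ j ∈ range (l + 1), l.choose (j + 1) * Nat.fib (a + (j + 1)) := by
      rw [← Finset.sum_add_distrib]
      exact Finset.sum_congr rfl fun j _ => h1 j
    have h3 : (∑ j ∈ range (l + 1), l.choose (j + 1) * Nat.fib (a + (j + 1)))
          + l.choose 0 * Nat.fib (a + 0)
        = ∑ j ∈ range (l + 1 + 1), l.choose j * Nat.fib (a + j) :=
      (Finset.sum_range_succ' (fun j => l.choose j * Nat.fib (a + j)) (l + 1)).symm
    have h4 : ∑ j ∈ range (l + 1 + 1), l.choose j * Nat.fib (a + j)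
        = ∑ j ∈ range (l + 1), l.choose j * Nat.fib (a + j)
          + l.choose (l + 1) * Nat.fib (a + (l + 1)) := Finset.sum_range_succ _ _
    have h5 : l.choose (l + 1) = 0 := Nat.choose_eq_zero_of_lt (by omega)
    have hfib : Nat.fib (a + 2 * (l + 1)) = Nat.fib (a + 2 * l) + Nat.fib (a + 1 + 2 * l) := by
      have := Nat.fib_add_two (n := a + 2 * l)
      have e1 : a + 2 * l + 2 = a + 2 * (l + 1) := by omega
      have e2 : a + 2 * l + 1 = a + 1 + 2 * l := by omega
      rw [e1, e2] at this
      exact this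
    rw [h0, h2, ih (a + 1), hfib]
    have : (l + 1).choose 0 * Nat.fib (a + 0) = l.choose 0 * Nat.fib (a + 0) := by simp
    rw [this]
    rw [add_assoc, h3, h4, h5, ih a]
    ring

noncomputable def IntP (S P : Finset (ℝ × ℝ)) : Finset (ℝ × ℝ) :=
  S.filter (fun p => p ∈ interior (convexHull ℝ (P : Set (ℝ × ℝ))))

noncomputable def gfun (S P : Finset (ℝ × ℝ)) : ℕ :=
  ∑ J ∈ (IntP S P).powerset, Nat.fib (P.card + J.card)

set_option maxHeartbeats 1000000 in

lemma count_main (S : Finset (ℝ × ℝ)) (hgp : GenPos S) (hn : 3 ≤ S.card) :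
    ∑ k ∈ Icc 3 S.card, ∑ l ∈ range (S.card - 2), Nat.fib (k + 2 * l) * X S k l
      = ∑ T ∈ S.powerset.filter (fun T => 3 ≤ T.card), Nat.fib T.card := by
  classical
  have step1 : ∀ k ∈ Icc 3 S.card, ∀ l : ℕ, Nat.fib (k + 2 * l) * X S k l
      = ∑ P ∈ (Finset.powersetCard k S).filter (fun T => ConvexPos T ∧
          (S.filter (fun p => p ∈ interior (convexHull ℝ (T : Set (ℝ × ℝ))))).card = l),
          gfun S P := by
    intro k hk l
    have hcongr : ∀ P ∈ (Finset.powersetCard k S).filter (fun T => ConvexPos T ∧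
        (S.filter (fun p => p ∈ interior (convexHull ℝ (T : Set (ℝ × ℝ))))).card = l),
        gfun S P = Nat.fib (k + 2 * l) := by
      intro P hP
      rw [Finset.mem_filter, Finset.mem_powersetCard] at hP
      obtain ⟨⟨hPS, hPk⟩, hCP, hl⟩ := hP
      rw [gfun]
      rw [Finset.sum_powerset_apply_card (fun m => Nat.fib (P.card + m))]
      have hc : (IntP S P).card = l := hl
      rw [hc, hPk]
      simp only [smul_eq_mul]
      exact fib_expand l k
    calc Nat.fib (k + 2 * l) * X S k l
        = ∑ _P ∈ (Finset.powersetCard k S).filter (fun T => ConvexPos T ∧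
            (S.filter (fun p => p ∈ interior (convexHull ℝ (T : Set (ℝ × ℝ))))).card = l),
            Nat.fib (k + 2 * l) := by
          rw [Finset.sum_const, smul_eq_mul, mul_comm]
          rfl
      _ = _ := Finset.sum_congr rfl (fun P hP => (hcongr P hP).symm)
  have step2 : ∀ k ∈ Icc 3 S.card,
      ∑ l ∈ range (S.card - 2), ∑ P ∈ (Finset.powersetCard k S).filter (fun T => ConvexPos T ∧
          (S.filter (fun p => p ∈ interior (convexHull ℝ (T : Set (ℝ × ℝ))))).card = l),
          gfun S P
        = ∑ P ∈ (Finset.powersetCard k S).filter ConvexPos, gfun S P := by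
    intro k hk
    rw [mem_Icc] at hk
    have hmaps : ∀ P ∈ (Finset.powersetCard k S).filter ConvexPos,
        (S.filter (fun p => p ∈ interior (convexHull ℝ (P : Set (ℝ × ℝ))))).card
          ∈ range (S.card - 2) := by
      intro P hP
      rw [Finset.mem_filter, Finset.mem_powersetCard] at hP
      obtain ⟨⟨hPS, hPk⟩, hCP⟩ := hP
      have hsub : S.filter (fun p => p ∈ interior (convexHull ℝ (P : Set (ℝ × ℝ)))) ⊆ S \ P := by
        intro x hx
        rw [Finset.mem_filter] at hx
        rw [Finset.mem_sdiff]
        exact ⟨hx.1, fun hxP => not_mem_interior_of_convexPos hCP hxP hx.2⟩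
      have hcard := Finset.card_le_card hsub
      rw [Finset.card_sdiff_of_subset hPS] at hcard
      have hk3 : 3 ≤ k := hk.1
      have hkn : k ≤ S.card := hk.2
      rw [Finset.mem_range]
      omega
    have hfib := Finset.sum_fiberwise_of_maps_to hmaps (gfun S)
    rw [← hfib]
    apply Finset.sum_congr rfl
    intro l _
    rw [Finset.filter_filter]
  have hmaps2 : ∀ P ∈ S.powerset.filter (fun P => ConvexPos P ∧ 3 ≤ P.card),
      P.card ∈ Icc 3 S.card := by
    intro P hP
    rw [Finset.mem_filter, Finset.mem_powerset] at hP
    rw [mem_Icc]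
    exact ⟨hP.2.2, Finset.card_le_card hP.1⟩
  have step3 := Finset.sum_fiberwise_of_maps_to hmaps2 (gfun S)
  have hfib2 : ∀ k ∈ Icc 3 S.card,
      (S.powerset.filter (fun P => ConvexPos P ∧ 3 ≤ P.card)).filter (fun P => P.card = k)
        = (Finset.powersetCard k S).filter ConvexPos := by
    intro k hk
    rw [mem_Icc] at hk
    ext P
    simp only [Finset.mem_filter, Finset.mem_powerset, Finset.mem_powersetCard]
    constructor
    · rintro ⟨⟨h1, h2, h3⟩, h4⟩
      exact ⟨⟨h1, h4⟩, h2⟩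
    · rintro ⟨⟨h1, h3⟩, h2⟩
      refine ⟨⟨h1, h2, ?_⟩, h3⟩
      omega
  have step4 : ∑ P ∈ S.powerset.filter (fun P => ConvexPos P ∧ 3 ≤ P.card), gfun S P
      = ∑ T ∈ S.powerset.filter (fun T => 3 ≤ T.card), Nat.fib T.card := by
    have hsig : ∑ P ∈ S.powerset.filter (fun P => ConvexPos P ∧ 3 ≤ P.card), gfun S P
        = ∑ p ∈ (S.powerset.filter (fun P => ConvexPos P ∧ 3 ≤ P.card)).sigma
            (fun P => (IntP S P).powerset), Nat.fib (p.1.card + p.2.card) := by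
      rw [Finset.sum_sigma]
      exact Finset.sum_congr rfl fun P _ => rfl
    rw [hsig]
    refine Finset.sum_nbij' (i := fun p => p.1 ∪ p.2)
      (j := fun T => ⟨extF T, T \ extF T⟩) ?_ ?_ ?_ ?_ ?_
    · -- i maps into target
      rintro ⟨P, J⟩ hp
      rw [Finset.mem_sigma, Finset.mem_filter, Finset.mem_powerset] at hp
      obtain ⟨⟨hPS, hCP, hP3⟩, hJ⟩ := hp
      rw [Finset.mem_powerset] at hJ
      rw [Finset.mem_filter, Finset.mem_powerset]
      constructor
      · apply Finset.union_subset hPS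
        exact (hJ.trans (Finset.filter_subset _ _))
      · exact le_trans hP3 (Finset.card_le_card Finset.subset_union_left)
    · -- j maps back
      intro T hT
      rw [Finset.mem_filter, Finset.mem_powerset] at hT
      obtain ⟨hTS, hT3⟩ := hT
      rw [Finset.mem_sigma, Finset.mem_filter, Finset.mem_powerset]
      refine ⟨⟨(extF_subset T).trans hTS, convexPos_extF T, three_le_card_extF hgp hTS hT3⟩, ?_⟩
      rw [Finset.mem_powerset]
      intro x hx
      rw [Finset.mem_sdiff] at hx
      rw [IntP, Finset.mem_filter]
      exact ⟨hTS hx.1, mem_interior_hull hgp hTS hT3 hx.1 hx.2⟩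
    · -- left inverse
      rintro ⟨P, J⟩ hp
      rw [Finset.mem_sigma, Finset.mem_filter, Finset.mem_powerset] at hp
      obtain ⟨⟨hPS, hCP, hP3⟩, hJ⟩ := hp
      rw [Finset.mem_powerset] at hJ
      have hdisj : Disjoint P J := by
        rw [Finset.disjoint_left]
        intro v hvP hvJ
        have hvI := hJ hvJ
        rw [IntP, Finset.mem_filter] at hvI
        exact not_mem_interior_of_convexPos hCP hvP hvI.2
      have hhullT : convexHull ℝ ((P ∪ J : Finset (ℝ × ℝ)) : Set (ℝ × ℝ))
          = convexHull ℝ (P : Set (ℝ × ℝ)) := by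
        apply Set.Subset.antisymm
        · apply convexHull_min _ (convex_convexHull ℝ _)
          rw [Finset.coe_union]
          apply Set.union_subset (subset_convexHull ℝ _)
          intro x hx
          have hxI : x ∈ IntP S P := hJ (by exact_mod_cast hx)
          rw [IntP, Finset.mem_filter] at hxI
          exact interior_subset hxI.2
        · apply convexHull_mono
          rw [Finset.coe_union]
          exact Set.subset_union_left
      have hext : extF (P ∪ J) = P := by
        apply Finset.coe_injective
        rw [extF_coe, hhullT, ← extF_coe, extF_of_convexPos hCP]
      show (⟨extF (P ∪ J), (P ∪ J) \ extF (P ∪ J)⟩ : Σ _ : Finset (ℝ × ℝ), Finset (ℝ × ℝ))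
        = ⟨P, J⟩
      rw [hext, Finset.union_sdiff_cancel_left hdisj]
    · -- right inverse
      intro T hT
      rw [Finset.mem_filter, Finset.mem_powerset] at hT
      exact Finset.union_sdiff_of_subset (extF_subset T)
    · -- values
      rintro ⟨P, J⟩ hp
      rw [Finset.mem_sigma, Finset.mem_filter, Finset.mem_powerset] at hp
      obtain ⟨⟨hPS, hCP, hP3⟩, hJ⟩ := hp
      rw [Finset.mem_powerset] at hJ
      have hdisj : Disjoint P J := by
        rw [Finset.disjoint_left]
        intro v hvP hvJ
        have hvI := hJ hvJ
        rw [IntP, Finset.mem_filter] at hvI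
        exact not_mem_interior_of_convexPos hCP hvP hvI.2
      rw [Finset.card_union_of_disjoint hdisj]
  calc ∑ k ∈ Icc 3 S.card, ∑ l ∈ range (S.card - 2), Nat.fib (k + 2 * l) * X S k l
      = ∑ k ∈ Icc 3 S.card, ∑ P ∈ (Finset.powersetCard k S).filter ConvexPos, gfun S P := by
        apply Finset.sum_congr rfl
        intro k hk
        rw [Finset.sum_congr rfl (fun l _ => step1 k hk l)]
        exact step2 k hk
    _ = ∑ P ∈ S.powerset.filter (fun P => ConvexPos P ∧ 3 ≤ P.card), gfun S P := by
        rw [← step3]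
        exact Finset.sum_congr rfl (fun k hk => by rw [hfib2 k hk])
    _ = _ := step4

lemma count_B (S : Finset (ℝ × ℝ)) (hn : 3 ≤ S.card) :
    ∑ T ∈ S.powerset.filter (fun T => 3 ≤ T.card), Nat.fib T.card + S.card + S.card.choose 2
      = Nat.fib (2 * S.card) := by
  classical
  have htot : ∑ T ∈ S.powerset, Nat.fib T.card = Nat.fib (2 * S.card) := by
    rw [Finset.sum_powerset_apply_card]
    have h := fib_expand S.card 0
    simp only [zero_add] at h
    simpa [smul_eq_mul] using h
  have hsplit := Finset.sum_filter_add_sum_filter_not S.powerset (fun T => 3 ≤ T.card)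
    (fun T => Nat.fib T.card)
  have hsmall : ∑ T ∈ S.powerset.filter (fun T => ¬ 3 ≤ T.card), Nat.fib T.card
      = S.card + S.card.choose 2 := by
    have hmaps : ∀ T ∈ S.powerset.filter (fun T => ¬ 3 ≤ T.card), T.card ∈ range 3 := by
      intro T hT
      rw [Finset.mem_filter] at hT
      rw [Finset.mem_range]
      omega
    rw [← Finset.sum_fiberwise_of_maps_to hmaps (fun T => Nat.fib T.card)]
    have hfiber : ∀ m, m < 3 → (S.powerset.filter (fun T => ¬ 3 ≤ T.card)).filter
        (fun T => T.card = m) = S.powersetCard m := by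
      intro m hm
      ext T
      simp only [Finset.mem_filter, Finset.mem_powerset, Finset.mem_powersetCard]
      constructor
      · rintro ⟨⟨h1, _⟩, h3⟩
        exact ⟨h1, h3⟩
      · rintro ⟨h1, h2⟩
        exact ⟨⟨h1, by omega⟩, h2⟩
    have hinner : ∀ m, ∑ T ∈ S.powersetCard m, Nat.fib T.card = S.card.choose m * Nat.fib m := by
      intro m
      have hc : ∀ T ∈ S.powersetCard m, Nat.fib T.card = Nat.fib m := by
        intro T hT
        rw [(Finset.mem_powersetCard.1 hT).2]
      rw [Finset.sum_congr rfl hc, Finset.sum_const, Finset.card_powersetCard, smul_eq_mul]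
    rw [Finset.sum_range_succ, Finset.sum_range_succ, Finset.sum_range_one]
    rw [hfiber 0 (by norm_num), hfiber 1 (by norm_num), hfiber 2 (by norm_num)]
    rw [hinner 0, hinner 1, hinner 2]
    simp [Nat.choose_one_right]
  omega

theorem stmt8 (S : Finset (ℝ × ℝ)) (hgp : GenPos S) (hn : 3 ≤ S.card) :
    ∑ k ∈ Finset.Icc 3 S.card, ∑ l ∈ Finset.range (S.card - 2),
      (Nat.fib (k + 2 * l) : ℤ) * X S k l =
    (Nat.fib (2 * S.card) : ℤ) - S.card - S.card.choose 2 := by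

  classical
  have hA := count_main S hgp hn
  have hB := count_B S hn
  have hcast : ∑ k ∈ Icc 3 S.card, ∑ l ∈ range (S.card - 2),
      (Nat.fib (k + 2 * l) : ℤ) * X S k l
      = ((∑ k ∈ Icc 3 S.card, ∑ l ∈ range (S.card - 2),
          Nat.fib (k + 2 * l) * X S k l : ℕ) : ℤ) := by
    push_cast
    rfl
  rw [hcast, hA]
  omega
end

section
/- Let f : ℕ × ℕ → ℝ satisfy f(k,ℓ) = f(k+1,ℓ−1) + f(k,ℓ−1) for all ℓ ≥ 1. Then for sets S of n ≥ d+1 points in general position in ℝ^d, the value F(S) = Σ_{k≥d+1} Σ_{ℓ≥0} f(k,ℓ)·X_{k,ℓ}(S) depends only on n and d, not on the particular point set S. -/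
open Finset
open scoped Classical

/-- general position in ℝ^d: no hyperplane contains more than d points,
i.e. every (d+1)-point subset affinely spans the whole space -/
def GenPosD (d : ℕ) (S : Finset (Fin d → ℝ)) : Prop :=
  ∀ T ⊆ S, T.card = d + 1 → affineSpan ℝ (T : Set (Fin d → ℝ)) = ⊤

def ConvexPosD (d : ℕ) (T : Finset (Fin d → ℝ)) : Prop :=
  ∀ p ∈ T, p ∉ convexHull ℝ ((T : Set (Fin d → ℝ)) \ {p})

/-- number of convex k-vertex polytopes spanned by S with exactly l points of S inside -/
noncomputable def XD (d : ℕ) (S : Finset (Fin d → ℝ)) (k l : ℕ) : ℕ :=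
  ((Finset.powersetCard k S).filter (fun T => ConvexPosD d T ∧
    (S.filter (fun p => p ∈ interior (convexHull ℝ (T : Set (Fin d → ℝ))))).card = l)).card

/-- number of extreme points (convex hull vertices) of S -/
noncomputable def hullVertsD (d : ℕ) (S : Finset (Fin d → ℝ)) : ℕ :=
  (S.filter (fun p => p ∉ convexHull ℝ ((S : Set (Fin d → ℝ)) \ {p}))).card

noncomputable def vertsF {d : ℕ} (U : Finset (Fin d → ℝ)) : Finset (Fin d → ℝ) :=
  U.filter (fun p => p ∉ convexHull ℝ ((U : Set (Fin d → ℝ)) \ {p}))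

lemma genpos_indep {d : ℕ} {S W : Finset (Fin d → ℝ)} (hS : GenPosD d S)
    (hcard : d + 1 ≤ S.card) (hW : W ⊆ S) (hle : W.card ≤ d + 1) :
    AffineIndependent ℝ ((↑) : ↥(W : Set (Fin d → ℝ)) → (Fin d → ℝ)) := by
  obtain ⟨V, hWV, hVS, hVcard⟩ := Finset.exists_subsuperset_card_eq hW hle hcard
  have hspan := hS V hVS hVcard
  have hV : AffineIndependent ℝ ((↑) : ↥(V : Set (Fin d → ℝ)) → (Fin d → ℝ)) := by
    rw [affineIndependent_iff_le_finrank_vectorSpan ℝ _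
      (by simp [hVcard] : Fintype.card (V : Set (Fin d → ℝ)) = d + 1)]
    rw [Subtype.range_coe, AffineSubspace.vectorSpan_eq_top_of_affineSpan_eq_top ℝ _ _ hspan]
    simp
  exact hV.mono (by exact_mod_cast hWV)

lemma genpos_span_top {d : ℕ} {S T : Finset (Fin d → ℝ)} (hS : GenPosD d S)
    (hTS : T ⊆ S) (hTcard : d + 1 ≤ T.card) :
    affineSpan ℝ (T : Set (Fin d → ℝ)) = ⊤ := by
  obtain ⟨V, hVT, hVcard⟩ := Finset.exists_subset_card_eq hTcard
  have := hS V (hVT.trans hTS) hVcard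
  refine top_le_iff.1 ?_
  rw [← this]
  exact affineSpan_mono ℝ (by exact_mod_cast hVT)

lemma hyper_card {d : ℕ} {S W : Finset (Fin d → ℝ)} (hS : GenPosD d S) (hWS : W ⊆ S)
    (f : (Fin d → ℝ) →L[ℝ] ℝ) (c : ℝ) (hWc : ∀ x ∈ W, f x = c)
    (x₀ : Fin d → ℝ) (hx₀ : f x₀ ≠ c) : W.card ≤ d := by
  by_contra h
  obtain ⟨V, hVW, hVcard⟩ := Finset.exists_subset_card_eq (show d + 1 ≤ W.card by omega)
  have htop := hS V (hVW.trans hWS) hVcard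
  have hmem : x₀ ∈ affineSpan ℝ (V : Set (Fin d → ℝ)) := htop ▸ AffineSubspace.mem_top ℝ _ _
  have : f x₀ = c := by
    refine affineSpan_induction (p := fun y => f y = c) hmem
      (fun x hx => hWc x (hVW hx)) ?_
    intro r u v w hu hv hw
    simp [vsub_eq_sub, vadd_eq_add, map_add, map_smul, map_sub, hu, hv, hw]
  exact hx₀ this

lemma vert_not_interior {d : ℕ} (hd : 1 ≤ d) {T : Finset (Fin d → ℝ)} (hT : ConvexPosD d T)
    {t : Fin d → ℝ} (ht : t ∈ T) : t ∉ interior (convexHull ℝ (T : Set (Fin d → ℝ))) := by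
  intro hint
  have hnt : Nontrivial (Fin d → ℝ) := by
    refine ⟨0, fun _ => 1, fun h => ?_⟩
    have := congrFun h ⟨0, by omega⟩
    norm_num at this
  by_cases hsing : (T : Set (Fin d → ℝ)) \ {t} = ∅
  · have hTt : (T : Set (Fin d → ℝ)) = {t} := by
      apply Set.eq_singleton_iff_unique_mem.2
      refine ⟨by exact_mod_cast ht, fun x hx => ?_⟩
      by_contra hne
      exact absurd (Set.mem_diff_singleton.2 ⟨hx, hne⟩) (hsing ▸ Set.notMem_empty x)
    rw [hTt, convexHull_singleton, interior_singleton] at hint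
    exact hint
  · obtain ⟨y, hy₀⟩ := Set.nonempty_iff_ne_empty.2 hsing
    have hyC : y ∈ convexHull ℝ ((T : Set (Fin d → ℝ)) \ {t}) := subset_convexHull ℝ _ hy₀
    have hty : t ≠ y := fun h => hT t ht (h ▸ hyC)
    obtain ⟨δ, hδpos, hball⟩ := Metric.isOpen_iff.1 isOpen_interior t hint
    have hnorm : 0 < ‖t - y‖ := by
      rw [norm_pos_iff]
      exact sub_ne_zero.2 hty
    set ε := δ / (2 * ‖t - y‖) with hε
    have hεpos : 0 < ε := by positivity
    have hzK : t + ε • (t - y) ∈ convexHull ℝ (T : Set (Fin d → ℝ)) := by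
      have hzb : t + ε • (t - y) ∈ Metric.ball t δ := by
        rw [Metric.mem_ball, dist_eq_norm]
        have h1 : t + ε • (t - y) - t = ε • (t - y) := by abel
        rw [h1, norm_smul, Real.norm_eq_abs, abs_of_pos hεpos]
        have h2 : ε * ‖t - y‖ = δ / 2 := by
          rw [hε]; field_simp
        rw [h2]; linarith
      exact interior_subset (hball hzb)
    have hTeq : insert t ((T : Set (Fin d → ℝ)) \ {t}) = (T : Set (Fin d → ℝ)) := by
      rw [Set.insert_diff_singleton]
      exact Set.insert_eq_self.2 (by exact_mod_cast ht)
    rw [← hTeq, convexHull_insert ⟨y, hy₀⟩, mem_convexJoin] at hzK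
    obtain ⟨a, ha, wpt, hwpt, hseg⟩ := hzK
    rw [Set.mem_singleton_iff] at ha
    obtain ⟨u, v, hu, hv, huv, hzw⟩ := hseg
    rw [ha] at hzw
    have hcomb : (ε + v) • t = ε • y + v • wpt := by
      have h1 : v • wpt = t + ε • (t - y) - u • t := by
        rw [← hzw]; module
      have hu' : u = 1 - v := by linarith
      rw [h1, hu']
      module
    have hsum : 0 < ε + v := by linarith
    have hteq : t = (ε / (ε + v)) • y + (v / (ε + v)) • wpt := by
      have h3 := congrArg (fun x => (ε + v)⁻¹ • x) hcomb
      simp only [smul_smul, smul_add] at h3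
      rw [inv_mul_cancel₀ (ne_of_gt hsum), one_smul] at h3
      rw [h3, div_eq_inv_mul, div_eq_inv_mul]
    have htseg : t ∈ segment ℝ y wpt :=
      ⟨ε / (ε + v), v / (ε + v), by positivity, by positivity,
        by field_simp, hteq.symm⟩
    exact hT t ht ((convex_convexHull ℝ _).segment_subset hyC hwpt htseg)

lemma notmem_hull_union {d : ℕ} {K B : Set (Fin d → ℝ)} (hK : Convex ℝ K) (hB : B ⊆ K)
    {t : Fin d → ℝ} (htI : t ∉ interior K) (htB : t ∉ convexHull ℝ B) :
    ∀ A : Finset (Fin d → ℝ), (A : Set (Fin d → ℝ)) ⊆ interior K →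
      t ∉ convexHull ℝ (B ∪ (A : Set (Fin d → ℝ))) := by
  intro A
  induction A using Finset.induction_on with
  | empty => simpa
  | @insert a A' ha ih =>
    intro hAK hmem
    have haK : a ∈ interior K := hAK (by simp)
    have hA'K : (A' : Set (Fin d → ℝ)) ⊆ interior K := by
      intro x hx
      apply hAK
      simp only [Finset.coe_insert, Set.mem_insert_iff]
      exact Or.inr hx
    have hrw : B ∪ ((insert a A' : Finset (Fin d → ℝ)) : Set (Fin d → ℝ))
        = insert a (B ∪ (A' : Set (Fin d → ℝ))) := by
      rw [Finset.coe_insert]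
      ext x; simp only [Set.mem_union, Set.mem_insert_iff]; tauto
    rw [hrw] at hmem
    rcases Set.eq_empty_or_nonempty (B ∪ (A' : Set (Fin d → ℝ))) with he | hne
    · have h5 : insert a (B ∪ (A' : Set (Fin d → ℝ))) = {a} := by rw [he]; ext x; simp
      rw [h5, convexHull_singleton] at hmem
      rw [Set.mem_singleton_iff] at hmem
      exact htI (hmem ▸ haK)
    · rw [convexHull_insert hne, mem_convexJoin] at hmem
      obtain ⟨a', ha', z, hz, hseg⟩ := hmem
      rw [Set.mem_singleton_iff] at ha'
      obtain ⟨u, v, hu, hv, huv, hts⟩ := hseg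
      rw [ha'] at hts
      have hzK : z ∈ K := by
        refine convexHull_min ?_ hK hz
        exact Set.union_subset hB (hA'K.trans interior_subset)
      rcases eq_or_lt_of_le hu with h0 | hupos
      · have hv1 : v = 1 := by linarith
        have : t = z := by rw [← hts, ← h0, hv1]; module
        exact ih hA'K (this ▸ hz)
      · rcases eq_or_lt_of_le hv with hv0 | hvpos
        · have hu1 : u = 1 := by linarith
          have : t = a := by rw [← hts, ← hv0, hu1]; module
          exact htI (this ▸ haK)
        · have : t ∈ interior K :=
            hK.openSegment_interior_closure_subset_interior haK (subset_closure hzK)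
              ⟨u, v, hupos, hvpos, huv, hts⟩
          exact htI this

lemma hull_vertsF {d : ℕ} (U : Finset (Fin d → ℝ)) :
    convexHull ℝ ((vertsF U : Finset (Fin d → ℝ)) : Set (Fin d → ℝ))
      = convexHull ℝ (U : Set (Fin d → ℝ)) := by
  refine le_antisymm (convexHull_mono (by exact_mod_cast Finset.filter_subset _ _)) ?_
  have hcomp : IsCompact (convexHull ℝ (U : Set (Fin d → ℝ))) :=
    U.finite_toSet.isCompact_convexHull (𝕜 := ℝ)
  have hKM := closure_convexHull_extremePoints hcomp (convex_convexHull ℝ _)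
  have hsub : Set.extremePoints ℝ (convexHull ℝ (U : Set (Fin d → ℝ)))
      ⊆ ((vertsF U : Finset (Fin d → ℝ)) : Set (Fin d → ℝ)) := by
    intro x hx
    have hxU : x ∈ (U : Set (Fin d → ℝ)) := extremePoints_convexHull_subset hx
    have hconv := ((convex_convexHull ℝ (U : Set (Fin d → ℝ))).mem_extremePoints_iff_convex_diff.1 hx).2
    have hsub2 : convexHull ℝ ((U : Set (Fin d → ℝ)) \ {x})
        ⊆ convexHull ℝ (U : Set (Fin d → ℝ)) \ {x} :=
      convexHull_min (Set.diff_subset_diff_left (subset_convexHull ℝ _)) hconv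
    simp only [vertsF, Finset.coe_filter, Set.mem_setOf_eq]
    exact ⟨by exact_mod_cast hxU, fun hxc => (hsub2 hxc).2 rfl⟩
  calc convexHull ℝ (U : Set (Fin d → ℝ))
      = closure (convexHull ℝ (Set.extremePoints ℝ (convexHull ℝ (U : Set (Fin d → ℝ))))) := hKM.symm
    _ ⊆ closure (convexHull ℝ ((vertsF U : Finset (Fin d → ℝ)) : Set (Fin d → ℝ))) :=
        closure_mono (convexHull_mono hsub)
    _ = convexHull ℝ ((vertsF U : Finset (Fin d → ℝ)) : Set (Fin d → ℝ)) :=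
        ((vertsF U).finite_toSet.isCompact_convexHull (𝕜 := ℝ)).isClosed.closure_eq

lemma mem_interior_hull_s15 {d : ℕ} {S T : Finset (Fin d → ℝ)} (hS : GenPosD d S)
    (hcard : d + 1 ≤ S.card) (hTS : T ⊆ S) (hTcard : d + 1 ≤ T.card)
    {p : Fin d → ℝ} (hpS : p ∈ S) (hpT : p ∉ T)
    (hpc : p ∈ convexHull ℝ (T : Set (Fin d → ℝ))) :
    p ∈ interior (convexHull ℝ (T : Set (Fin d → ℝ))) := by
  have hspanT : affineSpan ℝ (T : Set (Fin d → ℝ)) = ⊤ := genpos_span_top hS hTS hTcard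
  have hne : (interior (convexHull ℝ (T : Set (Fin d → ℝ)))).Nonempty := by
    rw [(convex_convexHull ℝ _).interior_nonempty_iff_affineSpan_eq_top,
      affineSpan_convexHull]
    exact hspanT
  by_contra hni
  obtain ⟨f, hfa⟩ := geometric_hahn_banach_open_point
    ((convex_convexHull ℝ (T : Set (Fin d → ℝ))).interior) isOpen_interior hni
  obtain ⟨a, ha⟩ := hne
  -- every point of the hull has f-value ≤ f p
  have hle : ∀ x ∈ convexHull ℝ (T : Set (Fin d → ℝ)), f x ≤ f p := by
    intro x hx
    have key : ∀ θ : ℝ, 0 < θ → θ ≤ 1 → θ * f a + (1 - θ) * f x < f p := by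
      intro θ h0 h1
      have hz : θ • a + (1 - θ) • x ∈ interior (convexHull ℝ (T : Set (Fin d → ℝ))) :=
        (convex_convexHull ℝ _).combo_interior_closure_mem_interior ha
          (subset_closure hx) h0 (by linarith) (by ring)
      have := hfa _ hz
      simpa [map_add, map_smul] using this
    by_contra hcon
    push_neg at hcon
    have hfa_lt : f a < f p := by simpa using key 1 one_pos le_rfl
    set c := f x - f a with hc
    set g := f x - f p with hg
    have hcpos : 0 < c := by simp only [hc]; linarith
    have hgpos : 0 < g := by simp only [hg]; linarith
    set θ := min (1/2 : ℝ) (g / (2 * c)) with hθ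
    have hθpos : 0 < θ := lt_min (by norm_num) (by positivity)
    have hθ1 : θ ≤ 1 := le_trans (min_le_left _ _) (by norm_num)
    have hθc : θ * c ≤ g / 2 := by
      calc θ * c ≤ (g / (2 * c)) * c := by
            exact mul_le_mul_of_nonneg_right (min_le_right _ _) hcpos.le
        _ = g / 2 := by field_simp
    have := key θ hθpos hθ1
    -- θ * f a + (1 - θ) * f x = f x - θ * c
    nlinarith [this]
  -- convex combination representation of p
  rw [Finset.convexHull_eq] at hpc
  obtain ⟨w, hw0, hw1, hwc⟩ := hpc
  have hwp : ∑ y ∈ T, w y • y = p := by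
    rw [← hwc, Finset.centerMass_eq_of_sum_1 _ id hw1]
    simp
  have hfp : ∑ y ∈ T, w y * f y = f p := by
    rw [← hwp, map_sum]
    simp [map_smul]
  have hzero : ∀ y ∈ T, w y * (f p - f y) = 0 := by
    have hsum : ∑ y ∈ T, w y * (f p - f y) = 0 := by
      have : ∑ y ∈ T, w y * (f p - f y)
          = (∑ y ∈ T, w y) * f p - ∑ y ∈ T, w y * f y := by
        rw [Finset.sum_mul, ← Finset.sum_sub_distrib]
        congr 1; ext y; ring
      rw [this, hw1, hfp]; ring
    intro y hy
    refine (Finset.sum_eq_zero_iff_of_nonneg ?_).1 hsum y hy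
    intro i hi
    exact mul_nonneg (hw0 i hi) (by linarith [hle i (subset_convexHull ℝ _ (by exact_mod_cast hi))])
  set T' := T.filter (fun y => f y = f p) with hT'
  have hwvanish : ∀ y ∈ T, y ∉ T' → w y = 0 := by
    intro y hy hy'
    have hfy : ¬ f y = f p := by
      simp only [hT', Finset.mem_filter] at hy'; tauto
    rcases mul_eq_zero.1 (hzero y hy) with h | h
    · exact h
    · exact absurd (by linarith : f y = f p) hfy
  have hT'sub : T' ⊆ T := Finset.filter_subset _ _
  have hw1' : ∑ y ∈ T', w y = 1 := by
    rw [Finset.sum_subset hT'sub (fun y hy hny => hwvanish y hy hny)]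
    exact hw1
  have hpT' : p ∈ convexHull ℝ (T' : Set (Fin d → ℝ)) := by
    rw [Finset.convexHull_eq]
    refine ⟨w, fun y hy => hw0 y (hT'sub hy), hw1', ?_⟩
    rw [Finset.centerMass_eq_of_sum_1 _ id hw1']
    rw [Finset.sum_subset hT'sub (fun y hy hny => by simp [hwvanish y hy hny])]
    simpa using hwp
  -- all points of insert p T' lie on the hyperplane f = f p
  have hins : ∀ x ∈ insert p T', f x = f p := by
    intro x hx
    rcases Finset.mem_insert.1 hx with rfl | hx
    · rfl
    · exact (Finset.mem_filter.1 hx).2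
  have hinsS : insert p T' ⊆ S := by
    intro x hx
    rcases Finset.mem_insert.1 hx with rfl | hx
    · exact hpS
    · exact hTS (hT'sub hx)
  have hcard' : (insert p T').card ≤ d :=
    hyper_card hS hinsS f (f p) hins a (ne_of_lt (hfa a ha))
  have hindep := genpos_indep hS hcard hinsS (hcard'.trans (Nat.le_succ d))
  -- p is in the affine span of T', contradicting affine independence
  have hpspan : p ∈ affineSpan ℝ (T' : Set (Fin d → ℝ)) :=
    convexHull_subset_affineSpan _ hpT'
  have hpmem : p ∈ (↑(insert p T') : Set (Fin d → ℝ)) := by simp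
  have hnot := hindep.notMem_affineSpan_diff ⟨p, hpmem⟩ Set.univ
  apply hnot
  refine affineSpan_mono ℝ ?_ hpspan
  intro y hy
  have hyT' : y ∈ T' := by exact_mod_cast hy
  have hyp : y ≠ p := fun h => hpT (hT'sub (h ▸ hyT'))
  exact ⟨⟨y, by exact_mod_cast Finset.mem_insert.2 (Or.inr hyT')⟩, ⟨trivial, by simp [Subtype.ext_iff, hyp]⟩, rfl⟩

lemma vertsF_subset {d : ℕ} (U : Finset (Fin d → ℝ)) : vertsF U ⊆ U :=
  Finset.filter_subset _ _

lemma vertsF_convexPos {d : ℕ} (U : Finset (Fin d → ℝ)) : ConvexPosD d (vertsF U) := by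
  intro p hp hmem
  have hp' := (Finset.mem_filter.1 hp).2
  apply hp'
  refine convexHull_mono ?_ hmem
  apply Set.diff_subset_diff_left
  exact_mod_cast vertsF_subset U

lemma vertsF_card {d : ℕ} {S U : Finset (Fin d → ℝ)} (hS : GenPosD d S)
    (hcard : d + 1 ≤ S.card) (hU : U ⊆ S) (hUcard : d + 1 ≤ U.card) :
    d + 1 ≤ (vertsF U).card := by
  have hspanU : affineSpan ℝ (U : Set (Fin d → ℝ)) = ⊤ := genpos_span_top hS hU hUcard
  have hspanV : affineSpan ℝ ((vertsF U : Finset (Fin d → ℝ)) : Set (Fin d → ℝ)) = ⊤ := by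
    refine top_le_iff.1 ?_
    rw [← hspanU]
    refine affineSpan_le.2 (fun x hx => ?_)
    refine convexHull_subset_affineSpan ((vertsF U : Finset (Fin d → ℝ)) : Set (Fin d → ℝ)) ?_
    rw [hull_vertsF]
    exact subset_convexHull ℝ _ hx
  by_contra hlt
  push_neg at hlt
  -- vertsF U is nonempty since its affine span is ⊤
  have hne : (vertsF U).Nonempty := by
    rw [← Finset.coe_nonempty]
    exact AffineSubspace.nonempty_of_affineSpan_eq_top ℝ (Fin d → ℝ) (Fin d → ℝ) hspanV
  obtain ⟨c, hc⟩ := Nat.exists_eq_add_of_lt (Finset.card_pos.2 hne)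
  -- card = c + 1 ≤ d
  have hcc : (vertsF U).card = ((vertsF U).card - 1) + 1 := by omega
  have hfr := finrank_vectorSpan_image_finset_le ℝ (id : (Fin d → ℝ) → (Fin d → ℝ))
    (vertsF U) hcc
  rw [Finset.image_id] at hfr
  rw [AffineSubspace.vectorSpan_eq_top_of_affineSpan_eq_top ℝ _ _ hspanV] at hfr
  simp only [finrank_top] at hfr
  have : Module.finrank ℝ (Fin d → ℝ) = d := by simp
  omega

lemma vertsF_union {d : ℕ} (hd : 1 ≤ d) {T A : Finset (Fin d → ℝ)} (hT : ConvexPosD d T)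
    (hA : (A : Set (Fin d → ℝ)) ⊆ interior (convexHull ℝ (T : Set (Fin d → ℝ)))) :
    vertsF (T ∪ A) = T := by
  have hdisj : ∀ t ∈ T, t ∉ A := fun t htm htA =>
    vert_not_interior hd hT htm (hA (by exact_mod_cast htA))
  have hsubhull : (A : Set (Fin d → ℝ)) ⊆ convexHull ℝ (T : Set (Fin d → ℝ)) :=
    hA.trans interior_subset
  have hhull : convexHull ℝ ((T ∪ A : Finset (Fin d → ℝ)) : Set (Fin d → ℝ))
      = convexHull ℝ (T : Set (Fin d → ℝ)) := by
    refine le_antisymm (convexHull_min ?_ (convex_convexHull ℝ _))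
      (convexHull_mono (by exact_mod_cast Finset.subset_union_left))
    rw [Finset.coe_union]
    exact Set.union_subset (subset_convexHull ℝ _) hsubhull
  ext x
  simp only [vertsF, Finset.mem_filter, Finset.mem_union]
  constructor
  · rintro ⟨hx | hx, hnc⟩
    · exact hx
    · by_cases hxT : x ∈ T
      · exact hxT
      exfalso
      apply hnc
      have hxint : x ∈ interior (convexHull ℝ (T : Set (Fin d → ℝ))) := hA (by exact_mod_cast hx)
      have hsub : (T : Set (Fin d → ℝ)) ⊆ ((T ∪ A : Finset (Fin d → ℝ)) : Set (Fin d → ℝ)) \ {x} := by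
        intro y hy
        refine ⟨by rw [Finset.coe_union]; exact Or.inl hy, ?_⟩
        intro h
        rw [Set.mem_singleton_iff] at h
        exact hxT (by exact_mod_cast h ▸ hy)
      exact convexHull_mono hsub (interior_subset hxint)
  · intro hx
    refine ⟨Or.inl hx, ?_⟩
    intro hmem
    have hnot : x ∉ convexHull ℝ (((T : Set (Fin d → ℝ)) \ {x}) ∪ (A : Set (Fin d → ℝ))) :=
      notmem_hull_union (convex_convexHull ℝ _)
        (Set.diff_subset.trans (subset_convexHull ℝ _))
        (vert_not_interior hd hT hx) (hT x hx) A hA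
    apply hnot
    refine convexHull_mono ?_ hmem
    intro y hy
    rw [Finset.coe_union] at hy
    obtain ⟨hy1 | hy1, hy2⟩ := hy
    · exact Or.inl ⟨hy1, hy2⟩
    · exact Or.inr hy1

lemma pascal_exp (f : ℕ → ℕ → ℝ) (hf : ∀ k l : ℕ, f k (l + 1) = f (k + 1) l + f k l)
    {d : ℕ} (P : Finset (Fin d → ℝ)) :
    ∀ k : ℕ, f k P.card = ∑ A ∈ P.powerset, f (k + A.card) 0 := by
  induction P using Finset.induction_on with
  | empty => intro k; simp
  | @insert a P ha ih =>
    intro k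
    rw [Finset.card_insert_of_notMem ha, hf k P.card, ih (k + 1), ih k,
      Finset.powerset_insert, Finset.sum_union, Finset.sum_image]
    · have h1 : ∀ A ∈ P.powerset, f (k + (insert a A).card) 0 = f (k + 1 + A.card) 0 := by
        intro A hA
        have haA : a ∉ A := fun h => ha ((Finset.mem_powerset.1 hA) h)
        rw [Finset.card_insert_of_notMem haA]
        congr 1
        omega
      rw [Finset.sum_congr rfl h1, add_comm]
    · intro A hA B hB h
      have haA : a ∉ A := fun hc => ha ((Finset.mem_powerset.1 hA) hc)
      have haB : a ∉ B := fun hc => ha ((Finset.mem_powerset.1 hB) hc)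
      rw [← Finset.erase_insert haA, ← Finset.erase_insert haB, h]
    · rw [Finset.disjoint_left]
      intro A hA hA'
      rw [Finset.mem_image] at hA'
      obtain ⟨B, hB, rfl⟩ := hA'
      exact ha ((Finset.mem_powerset.1 hA) (Finset.mem_insert_self a B))

lemma mainF {d : ℕ} (hd : 1 ≤ d) (f : ℕ → ℕ → ℝ)
    (hf : ∀ k l : ℕ, f k (l + 1) = f (k + 1) l + f k l)
    (S : Finset (Fin d → ℝ)) (hS : GenPosD d S) (hn : d + 1 ≤ S.card) :
    ∑ k ∈ Finset.Icc (d + 1) S.card, ∑ l ∈ Finset.range (S.card + 1),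
      f k l * XD d S k l
    = ∑ m ∈ Finset.Icc (d + 1) S.card, (S.card.choose m : ℝ) * f m 0 := by
  set IS : Finset (Fin d → ℝ) → Finset (Fin d → ℝ) :=
    fun T => S.filter (fun p => p ∈ interior (convexHull ℝ (T : Set (Fin d → ℝ)))) with hIS
  set 𝒯 : Finset (Finset (Fin d → ℝ)) :=
    S.powerset.filter (fun T => ConvexPosD d T ∧ d + 1 ≤ T.card) with h𝒯
  have stepA : ∑ k ∈ Finset.Icc (d + 1) S.card, ∑ l ∈ Finset.range (S.card + 1),
      f k l * XD d S k l = ∑ T ∈ 𝒯, f T.card (IS T).card := by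
    rw [← Finset.sum_product']
    rw [← Finset.sum_fiberwise_of_maps_to
      (g := fun T => (T.card, (IS T).card))
      (t := Finset.Icc (d + 1) S.card ×ˢ Finset.range (S.card + 1))
      (fun T hT => by
        simp only [h𝒯, Finset.mem_filter, Finset.mem_powerset] at hT
        obtain ⟨hTS, _, hTcard⟩ := hT
        simp only [Finset.mem_product, Finset.mem_Icc, Finset.mem_range]
        constructor
        · exact ⟨hTcard, Finset.card_le_card hTS⟩
        · exact Nat.lt_succ_of_le (Finset.card_le_card (Finset.filter_subset _ _)))
      (fun T => f T.card (IS T).card)]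
    refine Finset.sum_congr rfl (fun p hp => ?_)
    simp only [Finset.mem_product, Finset.mem_Icc, Finset.mem_range] at hp
    obtain ⟨⟨hp1, hp2⟩, hp3⟩ := hp
    have hconst : ∀ T ∈ 𝒯.filter (fun T => (T.card, (IS T).card) = p),
        f T.card (IS T).card = f p.1 p.2 := by
      intro T hT
      have h := (Finset.mem_filter.1 hT).2
      calc f T.card (IS T).card
          = f ((T.card, (IS T).card)).1 ((T.card, (IS T).card)).2 := rfl
        _ = f p.1 p.2 := by rw [h]
    rw [Finset.sum_congr rfl hconst, Finset.sum_const, nsmul_eq_mul, mul_comm]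
    congr 1
    rw [XD]
    norm_cast
    refine congrArg Finset.card ?_
    ext T
    simp only [Finset.mem_filter, Finset.mem_powersetCard, Finset.mem_powerset, h𝒯,
      Prod.ext_iff]
    constructor
    · rintro ⟨⟨hTS, hk⟩, hpos, hl⟩
      exact ⟨⟨hTS, hpos, by omega⟩, hk, hl⟩
    · rintro ⟨⟨hTS, hpos, hcard⟩, hk, hl⟩
      exact ⟨⟨hTS, hk⟩, hpos, hl⟩
  have stepB : ∑ T ∈ 𝒯, f T.card (IS T).card
      = ∑ T ∈ 𝒯, ∑ A ∈ (IS T).powerset, f (T.card + A.card) 0 :=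
    Finset.sum_congr rfl (fun T _ => pascal_exp f hf (IS T) T.card)
  have stepC : ∑ T ∈ 𝒯, ∑ A ∈ (IS T).powerset, f (T.card + A.card) 0
      = ∑ U ∈ S.powerset.filter (fun U => d + 1 ≤ U.card), f U.card 0 := by
    rw [Finset.sum_sigma']
    refine Finset.sum_nbij' (fun p => p.1 ∪ p.2)
      (fun U => ⟨vertsF U, U \ vertsF U⟩) ?_ ?_ ?_ ?_ ?_
    · rintro ⟨T, A⟩ hp
      rw [Finset.mem_sigma] at hp
      obtain ⟨hT, hA⟩ := hp
      simp only [h𝒯, Finset.mem_filter, Finset.mem_powerset] at hT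
      obtain ⟨hTS, hpos, hTcard⟩ := hT
      rw [Finset.mem_powerset] at hA
      have hAS : A ⊆ S := hA.trans (Finset.filter_subset _ _)
      simp only [Finset.mem_filter, Finset.mem_powerset]
      refine ⟨Finset.union_subset hTS hAS, ?_⟩
      exact hTcard.trans (Finset.card_le_card Finset.subset_union_left)
    · intro U hU
      simp only [Finset.mem_filter, Finset.mem_powerset] at hU
      obtain ⟨hUS, hUcard⟩ := hU
      have hVS : vertsF U ⊆ S := (vertsF_subset U).trans hUS
      have hVcard := vertsF_card hS hn hUS hUcard
      have hdiffint : ∀ p ∈ U \ vertsF U,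
          p ∈ interior (convexHull ℝ ((vertsF U : Finset (Fin d → ℝ)) : Set (Fin d → ℝ))) := by
        intro p hp
        rw [Finset.mem_sdiff] at hp
        obtain ⟨hpU, hpV⟩ := hp
        have hpc : p ∈ convexHull ℝ ((U : Set (Fin d → ℝ)) \ {p}) := by
          by_contra hc
          exact hpV (Finset.mem_filter.2 ⟨hpU, hc⟩)
        have hpc2 : p ∈ convexHull ℝ ((vertsF U : Finset (Fin d → ℝ)) : Set (Fin d → ℝ)) := by
          rw [hull_vertsF]
          exact convexHull_mono Set.diff_subset hpc
        exact mem_interior_hull_s15 hS hn hVS hVcard (hUS hpU) hpV hpc2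
      rw [Finset.mem_sigma]
      constructor
      · simp only [h𝒯, Finset.mem_filter, Finset.mem_powerset]
        exact ⟨hVS, vertsF_convexPos U, hVcard⟩
      · rw [Finset.mem_powerset]
        intro p hp
        rw [hIS]
        simp only [Finset.mem_filter]
        exact ⟨hUS (Finset.mem_sdiff.1 hp).1, hdiffint p hp⟩
    · rintro ⟨T, A⟩ hp
      rw [Finset.mem_sigma] at hp
      obtain ⟨hT, hA⟩ := hp
      simp only [h𝒯, Finset.mem_filter, Finset.mem_powerset] at hT
      obtain ⟨hTS, hpos, hTcard⟩ := hT
      rw [Finset.mem_powerset] at hA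
      have hAint : (A : Set (Fin d → ℝ)) ⊆
          interior (convexHull ℝ (T : Set (Fin d → ℝ))) := by
        intro x hx
        have := hA (by exact_mod_cast hx)
        rw [hIS] at this
        exact (Finset.mem_filter.1 this).2
      have hv := vertsF_union hd hpos hAint
      have hdisj : Disjoint T A := by
        rw [Finset.disjoint_left]
        intro t htT htA
        exact vert_not_interior hd hpos htT (hAint (by exact_mod_cast htA))
      have hdiff : (T ∪ A) \ T = A := Finset.union_sdiff_cancel_left hdisj
      simp only [hv, hdiff]
    · intro U hU
      simp only [Finset.union_sdiff_of_subset (vertsF_subset U)]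
    · rintro ⟨T, A⟩ hp
      rw [Finset.mem_sigma] at hp
      obtain ⟨hT, hA⟩ := hp
      simp only [h𝒯, Finset.mem_filter, Finset.mem_powerset] at hT
      obtain ⟨hTS, hpos, hTcard⟩ := hT
      rw [Finset.mem_powerset] at hA
      have hAint : (A : Set (Fin d → ℝ)) ⊆
          interior (convexHull ℝ (T : Set (Fin d → ℝ))) := by
        intro x hx
        have := hA (by exact_mod_cast hx)
        rw [hIS] at this
        exact (Finset.mem_filter.1 this).2
      have hdisj : Disjoint T A := by
        rw [Finset.disjoint_left]
        intro t htT htA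
        exact vert_not_interior hd hpos htT (hAint (by exact_mod_cast htA))
      rw [Finset.card_union_of_disjoint hdisj]
  have stepD : ∑ U ∈ S.powerset.filter (fun U => d + 1 ≤ U.card), f U.card 0
      = ∑ m ∈ Finset.Icc (d + 1) S.card, (S.card.choose m : ℝ) * f m 0 := by
    rw [← Finset.sum_fiberwise_of_maps_to
      (g := fun (U : Finset (Fin d → ℝ)) => U.card)
      (t := Finset.Icc (d + 1) S.card)
      (fun U hU => by
        simp only [Finset.mem_filter, Finset.mem_powerset] at hU
        rw [Finset.mem_Icc]
        exact ⟨hU.2, Finset.card_le_card hU.1⟩)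
      (fun U => f U.card 0)]
    refine Finset.sum_congr rfl (fun m hm => ?_)
    rw [Finset.mem_Icc] at hm
    have hconst : ∀ U ∈ (S.powerset.filter (fun U => d + 1 ≤ U.card)).filter
        (fun U => U.card = m), f U.card 0 = f m 0 := by
      intro U hU
      rw [(Finset.mem_filter.1 hU).2]
    rw [Finset.sum_congr rfl hconst, Finset.sum_const, nsmul_eq_mul]
    congr 1
    norm_cast
    rw [← Finset.card_powersetCard]
    refine congrArg Finset.card ?_
    ext U
    simp only [Finset.mem_filter, Finset.mem_powerset, Finset.mem_powersetCard]
    constructor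
    · rintro ⟨⟨h1, _⟩, h3⟩
      exact ⟨h1, h3⟩
    · rintro ⟨h1, h2⟩
      exact ⟨⟨h1, by omega⟩, h2⟩
  rw [stepA, stepB, stepC, stepD]

theorem stmt15 (d : ℕ) (f : ℕ → ℕ → ℝ)
    (hf : ∀ k l : ℕ, f k (l + 1) = f (k + 1) l + f k l)
    (S₁ S₂ : Finset (Fin d → ℝ)) (h₁ : GenPosD d S₁) (h₂ : GenPosD d S₂)
    (hn₁ : d + 1 ≤ S₁.card) (hn₂ : d + 1 ≤ S₂.card) (hcard : S₁.card = S₂.card) :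
    ∑ k ∈ Finset.Icc (d + 1) S₁.card, ∑ l ∈ Finset.range (S₁.card + 1),
      f k l * XD d S₁ k l =
    ∑ k ∈ Finset.Icc (d + 1) S₂.card, ∑ l ∈ Finset.range (S₂.card + 1),
      f k l * XD d S₂ k l := by
  rcases Nat.eq_zero_or_pos d with hd0 | hd
  · subst hd0
    have hsub : Subsingleton (Fin 0 → ℝ) := ⟨fun a b => funext fun i => i.elim0⟩
    have h12 : S₁ = S₂ := by
      apply Finset.eq_of_subset_of_card_le _ hcard.ge
      intro a ha
      obtain ⟨b, hb⟩ := Finset.card_pos.1 (show 0 < S₂.card by omega)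
      rwa [hsub.allEq a b]
    rw [h12]
  · rw [mainF hd f hf S₁ h₁ hn₁, mainF hd f hf S₂ h₂ hn₂, hcard]
end
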